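/- (Lyapunov lower bound) Suppose φ is α-strongly convex w.r.t. the ℓ_p norm, P is symmetric stochastic irreducible PSD, σ = min{1, n^{2/p−1}}, 0 < ω < 1, 0 < γ < ωασ, and 0 < τ ≤ ρ(ωασ − γ)/(2 − ω). Define V(t) = H(x^t, μ^t) + (ω/(2τ))‖μ⋆ − μ^{t−1}‖₂² + ρ Σ_i B_φ(x_i⋆, x_i^t), where H(x,μ) = L(x,μ) − L(x⋆,μ⋆) − τ‖(Q⊗I_n)x‖₂², Q = I − P, and μ^t = μ^{t−1} + τ(Q⊗I_n)x^t. Under the saddle point conditions, V(t) ≥ ((1−ω)ωασρ + γρ)/((2−ω)ωασ) · Σ_i B_φ(x_i⋆, x_i^t) ≥ 0. -/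

import Mathlib

/-- The `ℓ_p` norm of a vector in `ℝⁿ`. -/
noncomputable def lpNorm {n : ℕ} (p : ENNReal) [Fact (1 ≤ p)]
    (w : Fin n → ℝ) : ℝ :=
  ‖(WithLp.equiv p (Fin n → ℝ)).symm w‖

/-- Euclidean inner product on `ℝⁿ`. -/
def inn {n : ℕ} (u v : Fin n → ℝ) : ℝ := ∑ k, u k * v k

/-- Bregman divergence of `φ` with gradient map `gφ`. -/
noncomputable def bregman {n : ℕ} (φ : (Fin n → ℝ) → ℝ)
    (gφ : (Fin n → ℝ) → (Fin n → ℝ)) (u v : Fin n → ℝ) : ℝ :=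
  φ u - φ v - inn (gφ v) (u - v)

/-- Lagrangian of the consensus problem restricted to `X^m`. -/
noncomputable def lagrangian {m n : ℕ} (f : Fin m → (Fin n → ℝ) → ℝ)
    (P : Matrix (Fin m) (Fin m) ℝ) (x μ : Fin m → (Fin n → ℝ)) : ℝ :=
  ∑ i, f i (x i) + ∑ i, inn (μ i) (x i - ∑ j, P i j • x j)

/-- Squared norm of `(Q ⊗ Iₙ)x` with `Q = I − P`. -/
def qNormSq {m n : ℕ} (P : Matrix (Fin m) (Fin m) ℝ)
    (x : Fin m → (Fin n → ℝ)) : ℝ :=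
  ∑ i, ∑ k, (x i k - (∑ j, P i j • x j) k) ^ 2

/- ### Auxiliary lemmas -/

section Aux
open Finset Matrix

lemma aux_lemA {m : ℕ} (P : Matrix (Fin m) (Fin m) ℝ)
    (hnn : ∀ i j, 0 ≤ P i j) (hrow : ∀ i, ∑ j, P i j = 1) (hsym : P.IsSymm)
    (v : Fin m → ℝ) : ∑ i, (P.mulVec v i)^2 ≤ ∑ i, (v i)^2 := by
  have hcol : ∀ j, ∑ i, P i j = 1 := fun j => by
    calc ∑ i, P i j = ∑ i, P j i := Finset.sum_congr rfl fun i _ => (hsym.apply i j).symm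
      _ = 1 := hrow j
  have step : ∀ i, (P.mulVec v i)^2 ≤ ∑ j, P i j * (v j)^2 := by
    intro i
    have hc := Finset.sum_sq_le_sum_mul_sum_of_sq_eq_mul Finset.univ
      (r := fun j => P i j * v j) (f := fun j => P i j) (g := fun j => P i j * (v j)^2)
      (fun j _ => hnn i j) (fun j _ => mul_nonneg (hnn i j) (sq_nonneg _))
      (fun j _ => by ring)
    rw [hrow i, one_mul] at hc
    simpa [Matrix.mulVec, dotProduct] using hc
  calc ∑ i, (P.mulVec v i)^2 ≤ ∑ i, ∑ j, P i j * (v j)^2 :=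
        Finset.sum_le_sum fun i _ => step i
    _ = ∑ j, (∑ i, P i j) * (v j)^2 := by
        rw [Finset.sum_comm]; simp [Finset.sum_mul]
    _ = ∑ j, (v j)^2 := by simp [hcol]

open scoped MatrixOrder Matrix.Norms.L2Operator in
lemma aux_lemB {m : ℕ} (P : Matrix (Fin m) (Fin m) ℝ)
    (hnn : ∀ i j, 0 ≤ P i j) (hrow : ∀ i, ∑ j, P i j = 1) (hsym : P.IsSymm)
    (hpsd : P.PosSemidef) (v : Fin m → ℝ) :
    ∑ i, (P.mulVec v i)^2 ≤ ∑ i, v i * P.mulVec v i := by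
  set R := CFC.sqrt P with hRdef
  have hRsym : R.IsSymm := (Matrix.nonneg_iff_posSemidef.mp (CFC.sqrt_nonneg P)).isHermitian
  have hRR : R * R = P := CFC.sqrt_mul_sqrt_self P hpsd.nonneg
  have key : ∀ w : Fin m → ℝ, ∑ i, (R.mulVec w i)^2 = ∑ i, w i * P.mulVec w i := by
    intro w
    calc ∑ i, (R.mulVec w i)^2 = (R.mulVec w) ⬝ᵥ (R.mulVec w) := by
          simp [dotProduct, sq]
      _ = w ⬝ᵥ (P.mulVec w) := by
          rw [dotProduct_mulVec, ← Matrix.mulVec_transpose, hRsym.eq,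
            Matrix.mulVec_mulVec, hRR, dotProduct_comm]
      _ = ∑ i, w i * P.mulVec w i := rfl
  have key2 : ∀ w : Fin m → ℝ, ∑ i, (R.mulVec w i)^2 ≤ ∑ i, (w i)^2 := by
    intro w
    rw [key w]
    have hcs := Finset.sum_mul_sq_le_sq_mul_sq Finset.univ w (P.mulVec w)
    have hA := aux_lemA P hnn hrow hsym w
    have h0 : (0:ℝ) ≤ ∑ i, w i * P.mulVec w i := by
      have := hpsd.dotProduct_mulVec_nonneg w
      simpa [dotProduct, star, mul_comm] using this
    have hw0 : (0:ℝ) ≤ ∑ i, (w i)^2 := Finset.sum_nonneg fun i _ => sq_nonneg _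
    nlinarith [Finset.sum_nonneg (fun i (_ : i ∈ Finset.univ) => sq_nonneg (P.mulVec w i))]
  have hPv : P.mulVec v = R.mulVec (R.mulVec v) := by
    rw [Matrix.mulVec_mulVec, hRR]
  calc ∑ i, (P.mulVec v i)^2 = ∑ i, (R.mulVec (R.mulVec v) i)^2 := by rw [hPv]
    _ ≤ ∑ i, (R.mulVec v i)^2 := key2 _
    _ = ∑ i, v i * P.mulVec v i := key v

lemma aux_lemC {m : ℕ} (P : Matrix (Fin m) (Fin m) ℝ)
    (hnn : ∀ i j, 0 ≤ P i j) (hrow : ∀ i, ∑ j, P i j = 1) (hsym : P.IsSymm)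
    (hpsd : P.PosSemidef) (v : Fin m → ℝ) :
    ∑ i, (v i - P.mulVec v i)^2 ≤ ∑ i, (v i)^2 := by
  have hB := aux_lemB P hnn hrow hsym hpsd v
  have h0 : (0:ℝ) ≤ ∑ i, v i * P.mulVec v i := by
    have := hpsd.dotProduct_mulVec_nonneg v
    simpa [dotProduct, star, mul_comm] using this
  have hexp : ∑ i, (v i - P.mulVec v i)^2
      = ∑ i, (v i)^2 - 2 * ∑ i, v i * P.mulVec v i + ∑ i, (P.mulVec v i)^2 := by
    rw [Finset.mul_sum, ← Finset.sum_sub_distrib, ← Finset.sum_add_distrib]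
    exact Finset.sum_congr rfl fun i _ => by ring
  linarith

lemma aux_sum_rpow_le {ι : Type*} [Fintype ι] (b : ι → ℝ) (hb : ∀ i, 0 ≤ b i)
    {r : ℝ} (hr : 1 ≤ r) : ∑ i, b i ^ r ≤ (∑ i, b i) ^ r := by
  set S := ∑ i, b i with hS
  have hS0 : 0 ≤ S := Finset.sum_nonneg fun i _ => hb i
  rcases eq_or_lt_of_le hS0 with h0 | hpos
  · have hall : ∀ i ∈ Finset.univ, b i = 0 :=
      fun i _ => le_antisymm (by
        have := Finset.single_le_sum (f := b) (fun j _ => hb j) (Finset.mem_univ i)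
        linarith [this]) (hb i)
    have : ∑ i, b i ^ r = 0 := Finset.sum_eq_zero fun i hi => by
      rw [hall i hi, Real.zero_rpow (by linarith : r ≠ 0)]
    rw [this, ← h0, Real.zero_rpow (by linarith : r ≠ 0)]
  · have step : ∀ i, b i ^ r ≤ S ^ (r - 1) * b i := by
      intro i
      have hbS : b i ≤ S := Finset.single_le_sum (fun j _ => hb j) (Finset.mem_univ i)
      calc b i ^ r = b i ^ (r - 1 + 1) := by norm_num
        _ = b i ^ (r-1) * b i ^ (1:ℝ) := Real.rpow_add' (hb i) (by linarith)
        _ = b i ^ (r-1) * b i := by rw [Real.rpow_one]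
        _ ≤ S ^ (r - 1) * b i := by
            apply mul_le_mul_of_nonneg_right _ (hb i)
            exact Real.rpow_le_rpow (hb i) hbS (by linarith)
    calc ∑ i, b i ^ r ≤ ∑ i, S ^ (r-1) * b i := Finset.sum_le_sum fun i _ => step i
      _ = S ^ (r-1) * S := by rw [← Finset.mul_sum]
      _ = S ^ (r-1) * S ^ (1:ℝ) := by rw [Real.rpow_one]
      _ = S ^ (r - 1 + 1) := (Real.rpow_add hpos _ _).symm
      _ = S ^ r := by norm_num

lemma aux_lemD {n : ℕ} (p : ENNReal) [hpf : Fact (1 ≤ p)] (z : Fin n → ℝ) :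
    min 1 ((n:ℝ) ^ (2 / p.toReal - 1)) * ∑ k, (z k)^2 ≤ (lpNorm p z)^2 := by
  have hp1 : 1 ≤ p := hpf.out
  have hz2 : (0:ℝ) ≤ ∑ k, (z k)^2 := Finset.sum_nonneg fun k _ => sq_nonneg _
  have hlp0 : 0 ≤ lpNorm p z := norm_nonneg _
  rcases le_or_gt p 2 with hple | hpgt
  · have htop : p ≠ ⊤ := by
      intro h; rw [h] at hple; exact absurd hple (by simp)
    have hpt1 : 1 ≤ p.toReal := by
      have := ENNReal.toReal_mono htop hp1
      simpa using this
    have hpt2 : p.toReal ≤ 2 := by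
      have := ENNReal.toReal_mono (by simp : (2:ENNReal) ≠ ⊤) hple
      simpa using this
    have hpt0 : 0 < p.toReal := by linarith
    set pt := p.toReal with hptdef
    have hnorm : lpNorm p z = (∑ k, |z k| ^ pt) ^ (1 / pt) := by
      rw [lpNorm, PiLp.norm_eq_sum hpt0]
      simp [Real.norm_eq_abs, hptdef]
    have hsum0 : (0:ℝ) ≤ ∑ k, |z k| ^ pt :=
      Finset.sum_nonneg fun k _ => Real.rpow_nonneg (abs_nonneg _) _
    have hsq : (lpNorm p z)^2 = (∑ k, |z k| ^ pt) ^ (2 / pt) := by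
      rw [hnorm, ← Real.rpow_natCast ((∑ k, |z k| ^ pt) ^ (1/pt)) 2,
        ← Real.rpow_mul hsum0]
      norm_num
      congr 1
      ring
    have key : ∑ k, (z k)^2 ≤ (∑ k, |z k| ^ pt) ^ (2 / pt) := by
      have hb : ∀ k, (0:ℝ) ≤ |z k| ^ pt := fun k => Real.rpow_nonneg (abs_nonneg _) _
      have hr : 1 ≤ 2 / pt := by
        rw [le_div_iff₀ hpt0]; linarith
      have := aux_sum_rpow_le (fun k => |z k| ^ pt) hb hr
      have heq : ∀ k, (|z k| ^ pt) ^ (2/pt) = (z k)^2 := by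
        intro k
        rw [← Real.rpow_mul (abs_nonneg _)]
        have h2 : pt * (2/pt) = 2 := by field_simp
        rw [h2, show ((2:ℝ)) = ((2:ℕ):ℝ) by norm_num, Real.rpow_natCast, sq_abs]
      calc ∑ k, (z k)^2 = ∑ k, (|z k| ^ pt) ^ (2/pt) := by
            exact (Finset.sum_congr rfl fun k _ => (heq k)).symm
        _ ≤ (∑ k, |z k| ^ pt) ^ (2/pt) := this
    calc min 1 ((n:ℝ) ^ (2 / p.toReal - 1)) * ∑ k, (z k)^2
        ≤ 1 * ∑ k, (z k)^2 := mul_le_mul_of_nonneg_right (min_le_left _ _) hz2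
      _ = ∑ k, (z k)^2 := one_mul _
      _ ≤ (lpNorm p z)^2 := by rw [hsq]; exact key
  · rcases Nat.eq_zero_or_pos n with hn0 | hn
    · subst hn0
      have : ∑ k : Fin 0, (z k)^2 = 0 := rfl
      rw [this, mul_zero]
      positivity
    have hnR : (0:ℝ) < n := by exact_mod_cast hn
    have hminle : min 1 ((n:ℝ) ^ (2 / p.toReal - 1)) ≤ (n:ℝ) ^ (2 / p.toReal - 1) :=
      min_le_right _ _
    have hmain : (n:ℝ) ^ (2 / p.toReal - 1) * ∑ k, (z k)^2 ≤ (lpNorm p z)^2 := by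
      rcases eq_or_ne p ⊤ with htop | htop
      · subst htop
        have hsup : lpNorm ⊤ z = ⨆ k, ‖z k‖ := by
          rw [lpNorm]; exact PiLp.norm_eq_ciSup _
        have hbound : ∀ k, (z k)^2 ≤ (⨆ j, ‖z j‖)^2 := by
          intro k
          have h1 : ‖z k‖ ≤ ⨆ j, ‖z j‖ :=
            le_ciSup (f := fun j => ‖z j‖) (Set.Finite.bddAbove (Set.finite_range _)) k
          calc (z k)^2 = ‖z k‖^2 := by rw [Real.norm_eq_abs, sq_abs]
            _ ≤ (⨆ j, ‖z j‖)^2 := by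
                apply pow_le_pow_left₀ (norm_nonneg _) h1
        have hsumle : ∑ k, (z k)^2 ≤ (n:ℝ) * (⨆ j, ‖z j‖)^2 := by
          calc ∑ k, (z k)^2 ≤ ∑ _k : Fin n, (⨆ j, ‖z j‖)^2 :=
                Finset.sum_le_sum fun k _ => hbound k
            _ = (n:ℝ) * (⨆ j, ‖z j‖)^2 := by
                rw [Finset.sum_const]; simp [nsmul_eq_mul]
        have hexp : (2 / (⊤:ENNReal).toReal - 1 : ℝ) = -1 := by simp
        rw [hexp, hsup]
        rw [Real.rpow_neg_one]
        calc (n:ℝ)⁻¹ * ∑ k, (z k)^2 ≤ (n:ℝ)⁻¹ * ((n:ℝ) * (⨆ j, ‖z j‖)^2) := by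
              apply mul_le_mul_of_nonneg_left hsumle (by positivity)
          _ = (⨆ j, ‖z j‖)^2 := by field_simp
      · have hpt2 : 2 ≤ p.toReal := by
          have := ENNReal.toReal_mono htop hpgt.le
          simpa using this
        have hpt0 : 0 < p.toReal := by linarith
        set pt := p.toReal with hptdef
        have hnorm : lpNorm p z = (∑ k, |z k| ^ pt) ^ (1 / pt) := by
          rw [lpNorm, PiLp.norm_eq_sum hpt0]
          simp [Real.norm_eq_abs, hptdef]
        have hsum0 : (0:ℝ) ≤ ∑ k, |z k| ^ pt :=
          Finset.sum_nonneg fun k _ => Real.rpow_nonneg (abs_nonneg _) _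
        have hsq : (lpNorm p z)^2 = (∑ k, |z k| ^ pt) ^ (2 / pt) := by
          rw [hnorm, ← Real.rpow_natCast ((∑ k, |z k| ^ pt) ^ (1/pt)) 2,
            ← Real.rpow_mul hsum0]
          norm_num
          congr 1
          ring
        have hq1 : (1:ℝ) ≤ pt / 2 := by linarith
        have hH := Real.inner_le_weight_mul_Lp_of_nonneg Finset.univ hq1
          (fun _ : Fin n => (1:ℝ)) (fun k => (z k)^2)
          (fun _ => zero_le_one) (fun k => sq_nonneg _)
        simp only [one_mul] at hH
        have hcard : ∑ _k : Fin n, (1:ℝ) = (n:ℝ) := by simp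
        have hfp : ∀ k, ((z k)^2) ^ (pt/2) = |z k| ^ pt := by
          intro k
          rw [← sq_abs, ← Real.rpow_natCast (|z k|) 2, ← Real.rpow_mul (abs_nonneg _)]
          congr 1
          push_cast
          field_simp
        rw [hcard] at hH
        have hH2 : ∑ k, (z k)^2 ≤ (n:ℝ) ^ (1 - 2/pt) * (∑ k, |z k| ^ pt) ^ (2/pt) := by
          have h1 : (1 - (pt/2)⁻¹ : ℝ) = 1 - 2/pt := by
            rw [inv_div]
          have h2 : ((pt/2)⁻¹ : ℝ) = 2/pt := by rw [inv_div]
          rw [h1, h2] at hH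
          calc ∑ k, (z k)^2 ≤ (n:ℝ) ^ (1 - 2/pt) * (∑ k, ((z k)^2) ^ (pt/2)) ^ (2/pt) := hH
            _ = (n:ℝ) ^ (1 - 2/pt) * (∑ k, |z k| ^ pt) ^ (2/pt) := by
                congr 2
                exact Finset.sum_congr rfl fun k _ => hfp k
        rw [hsq]
        calc (n:ℝ) ^ (2/pt - 1) * ∑ k, (z k)^2
            ≤ (n:ℝ) ^ (2/pt - 1) * ((n:ℝ) ^ (1 - 2/pt) * (∑ k, |z k| ^ pt) ^ (2/pt)) := by
              apply mul_le_mul_of_nonneg_left hH2 (Real.rpow_nonneg (le_of_lt hnR) _)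
          _ = (∑ k, |z k| ^ pt) ^ (2/pt) := by
              rw [← mul_assoc, ← Real.rpow_add hnR]
              norm_num
    calc min 1 ((n:ℝ) ^ (2 / p.toReal - 1)) * ∑ k, (z k)^2
        ≤ (n:ℝ) ^ (2 / p.toReal - 1) * ∑ k, (z k)^2 :=
          mul_le_mul_of_nonneg_right hminle hz2
      _ ≤ (lpNorm p z)^2 := hmain

lemma inn_comm' {n : ℕ} (u v : Fin n → ℝ) : inn u v = inn v u := by
  simp [inn, mul_comm]

lemma inn_sub_right' {n : ℕ} (u v w : Fin n → ℝ) :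
    inn u (v - w) = inn u v - inn u w := by
  simp [inn, mul_sub, Finset.sum_sub_distrib]

lemma inn_neg_left' {n : ℕ} (u v : Fin n → ℝ) : inn (-u) v = - inn u v := by
  simp [inn, neg_mul, Finset.sum_neg_distrib]

lemma inn_sub_left' {n : ℕ} (u v w : Fin n → ℝ) :
    inn (u - v) w = inn u w - inn v w := by
  simp [inn, sub_mul, Finset.sum_sub_distrib]

lemma inn_smul_sum_right' {n m : ℕ} (u : Fin n → ℝ) (c : Fin m → ℝ)
    (x : Fin m → Fin n → ℝ) :
    inn u (∑ j, c j • x j) = ∑ j, c j * inn u (x j) := by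
  simp only [inn, Finset.sum_apply, Pi.smul_apply, smul_eq_mul, Finset.mul_sum]
  rw [Finset.sum_comm]
  exact Finset.sum_congr rfl fun j _ => Finset.sum_congr rfl fun k _ => by ring

lemma aux_keyId {m n : ℕ} (P : Matrix (Fin m) (Fin m) ℝ) (hsym : P.IsSymm)
    (μ x : Fin m → Fin n → ℝ) :
    ∑ i, inn (μ i) (x i - ∑ j, P i j • x j)
      = ∑ i, inn (μ i - ∑ j, P i j • μ j) (x i) := by
  have hL : ∀ i, inn (μ i) (x i - ∑ j, P i j • x j)
      = inn (μ i) (x i) - ∑ j, P i j * inn (μ i) (x j) := fun i => by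
    rw [inn_sub_right', inn_smul_sum_right']
  have hR : ∀ i, inn (μ i - ∑ j, P i j • μ j) (x i)
      = inn (μ i) (x i) - ∑ j, P i j * inn (μ j) (x i) := fun i => by
    rw [inn_comm', inn_sub_right', inn_smul_sum_right', inn_comm' (x i) (μ i)]
    congr 1
    exact Finset.sum_congr rfl fun j _ => by rw [inn_comm']
  have hswap : ∑ i, ∑ j, P i j * inn (μ i) (x j)
      = ∑ i, ∑ j, P i j * inn (μ j) (x i) := by
    rw [Finset.sum_comm]
    exact Finset.sum_congr rfl fun i _ => Finset.sum_congr rfl fun j _ => by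
      rw [hsym.apply i j]
  simp only [hL, hR, Finset.sum_sub_distrib, hswap]

end Aux

set_option maxHeartbeats 1000000 in
/-- Lyapunov lower bound (Lemma 3 of the paper): under the parameter
conditions `0 < ω < 1`, `0 < γ < ωασ` and `0 < τ ≤ ρ(ωασ − γ)/(2 − ω)`,
the Lyapunov function `V(t)` is bounded below by a positive multiple of
`∑ᵢ B_φ(xᵢ⋆, xᵢᵗ)`, hence nonnegative. -/
theorem lyapunov_lower_bound {m n : ℕ} (p : ENNReal) [Fact (1 ≤ p)]
    (D X : Set (Fin n → ℝ))
    (hDconv : Convex ℝ D) (hDopen : IsOpen D)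
    (hXconv : Convex ℝ X) (hXclosed : IsClosed X) (hXD : X ⊆ closure D)
    (φ : (Fin n → ℝ) → ℝ) (gφ : (Fin n → ℝ) → (Fin n → ℝ))
    (hφconv : StrictConvexOn ℝ D φ)
    (f : Fin m → (Fin n → ℝ) → ℝ) (hf : ∀ i, ConvexOn ℝ X (f i))
    (P : Matrix (Fin m) (Fin m) ℝ)
    (hsym : P.IsSymm) (hnn : ∀ i j, 0 ≤ P i j)
    (hrow : ∀ i, ∑ j, P i j = 1) (hpsd : P.PosSemidef)
    (hirr : ∀ i j, ∃ k : ℕ, 0 < (P ^ k) i j)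
    (α ω γ τ ρ : ℝ)
    (σ : ℝ) (hσ : σ = min 1 ((n : ℝ) ^ (2 / p.toReal - 1)))
    (hα : 0 < α) (hρ : 0 < ρ) (hω0 : 0 < ω) (hω1 : ω < 1)
    (hγ0 : 0 < γ) (hγ : γ < ω * α * σ)
    (hτ0 : 0 < τ) (hτ : τ ≤ ρ * (ω * α * σ - γ) / (2 - ω))
    -- `φ` is `α`-strongly convex with respect to the `ℓ_p` norm:
    (hstrong : ∀ u ∈ X, ∀ v ∈ X,
      bregman φ gφ u v ≥ α / 2 * lpNorm p (u - v) ^ 2)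
    (xt xs μt μtm1 μs : Fin m → (Fin n → ℝ))
    (hxt : ∀ i, xt i ∈ X ∩ D) (hxs : ∀ i, xs i ∈ X ∩ D)
    -- saddle-point conditions:
    (hconsensus : ∀ i, ∑ j, P i j • xs j = xs i)
    (hsubgrad : ∀ i, ∀ v ∈ X,
      f i v - f i (xs i) ≥ inn (-μs i + ∑ j, P i j • μs j) (v - xs i))
    -- dual update:
    (hμ : ∀ i, μt i = μtm1 i + τ • (xt i - ∑ j, P i j • xt j)) :
    lagrangian f P xt μt - lagrangian f P xs μs - τ * qNormSq P xt +
        ω / (2 * τ) * ∑ i, ∑ k, (μs i k - μtm1 i k) ^ 2 +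
        ρ * ∑ i, bregman φ gφ (xs i) (xt i) ≥
      ((1 - ω) * ω * α * σ * ρ + γ * ρ) / ((2 - ω) * ω * α * σ) *
        ∑ i, bregman φ gφ (xs i) (xt i) ∧
    0 ≤ lagrangian f P xt μt - lagrangian f P xs μs - τ * qNormSq P xt +
        ω / (2 * τ) * ∑ i, ∑ k, (μs i k - μtm1 i k) ^ 2 +
        ρ * ∑ i, bregman φ gφ (xs i) (xt i) := by
  classical
  have hσ0 : 0 < σ := by
    by_contra h
    push_neg at h
    nlinarith [mul_pos hω0 hα]
  have hs : 0 < ω * α * σ := by positivity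
  have h2ω : 0 < 2 - ω := by linarith
  set q : Fin m → Fin n → ℝ := fun i => xt i - ∑ j, P i j • xt j with hqdef
  set B : ℝ := ∑ i, bregman φ gφ (xs i) (xt i) with hBdef
  set N : ℝ := ∑ i, ∑ k, (xt i k - xs i k)^2 with hNdef
  set SQ : ℝ := ∑ i, ∑ k, (q i k)^2 with hSQdef
  set SA : ℝ := ∑ i, ∑ k, (μs i k - μtm1 i k)^2 with hSAdef
  set SC : ℝ := ∑ i, ∑ k, (μs i k - μtm1 i k) * q i k with hSCdef
  -- qNormSq = SQ
  have hQeq : qNormSq P xt = SQ := rfl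
  -- coordinatewise dual update
  have hμk : ∀ i k, μt i k = μtm1 i k + τ * q i k := by
    intro i k
    have := congrFun (hμ i) k
    simpa [hqdef] using this
  -- the inner product term
  have h3 : ∑ i, inn (μt i) (q i) - ∑ i, inn (μs i) (q i) = τ * SQ - SC := by
    have e1 : ∀ i, inn (μt i) (q i) - inn (μs i) (q i)
        = ∑ k, (τ * (q i k)^2 - (μs i k - μtm1 i k) * q i k) := by
      intro i
      rw [← inn_sub_left']
      simp only [inn, Pi.sub_apply]
      exact Finset.sum_congr rfl fun k _ => by rw [hμk i k]; ring
    calc ∑ i, inn (μt i) (q i) - ∑ i, inn (μs i) (q i)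
        = ∑ i, (inn (μt i) (q i) - inn (μs i) (q i)) := by
          rw [Finset.sum_sub_distrib]
      _ = ∑ i, ∑ k, (τ * (q i k)^2 - (μs i k - μtm1 i k) * q i k) :=
          Finset.sum_congr rfl fun i _ => e1 i
      _ = τ * SQ - SC := by
          rw [hSQdef, hSCdef, Finset.mul_sum, ← Finset.sum_sub_distrib]
          exact Finset.sum_congr rfl fun i _ => by
            rw [Finset.mul_sum, ← Finset.sum_sub_distrib]
  -- vanishing of Q at the consensual point
  have hQxs : ∀ i, xs i - ∑ j, P i j • xs j = 0 := fun i => by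
    rw [hconsensus i]; simp
  have hinn_xs : ∑ i, inn (μs i) (xs i - ∑ j, P i j • xs j) = 0 :=
    Finset.sum_eq_zero fun i _ => by rw [hQxs i]; simp [inn]
  -- subgradient inequality summed
  have hfsum : ∑ i, (f i (xt i) - f i (xs i)) ≥ - ∑ i, inn (μs i) (q i) := by
    have hsg : ∀ i, f i (xt i) - f i (xs i)
        ≥ - inn (μs i - ∑ j, P i j • μs j) (xt i - xs i) := by
      intro i
      have h := hsubgrad i (xt i) (hxt i).1
      have heq : -μs i + ∑ j, P i j • μs j = -(μs i - ∑ j, P i j • μs j) := by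
        funext k; simp; ring
      rw [heq, inn_neg_left'] at h
      exact h
    have hkey_t := aux_keyId P hsym μs xt
    have hkey_s := aux_keyId P hsym μs xs
    rw [hinn_xs] at hkey_s
    calc ∑ i, (f i (xt i) - f i (xs i))
        ≥ ∑ i, (- inn (μs i - ∑ j, P i j • μs j) (xt i - xs i)) :=
          Finset.sum_le_sum fun i _ => hsg i
      _ = - (∑ i, inn (μs i - ∑ j, P i j • μs j) (xt i)
            - ∑ i, inn (μs i - ∑ j, P i j • μs j) (xs i)) := by
          rw [← Finset.sum_sub_distrib, ← Finset.sum_neg_distrib]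
          exact Finset.sum_congr rfl fun i _ => by rw [inn_sub_right']
      _ = - ∑ i, inn (μs i) (q i) := by
          rw [← hkey_t, ← hkey_s]
          simp [hqdef]
  -- Lagrangian difference
  have hΔL : lagrangian f P xt μt - lagrangian f P xs μs
      = (∑ i, (f i (xt i) - f i (xs i))) + ∑ i, inn (μt i) (q i) := by
    unfold lagrangian
    rw [hinn_xs, Finset.sum_sub_distrib]
    simp [hqdef]
    ring
  -- H ≥ -SC
  have hH : lagrangian f P xt μt - lagrangian f P xs μs - τ * qNormSq P xt ≥ -SC := by
    rw [hΔL, hQeq]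
    linarith [hfsum, h3]
  -- Young's inequality
  have hYoung : ω / (2*τ) * SA - SC + τ / (2*ω) * SQ ≥ 0 := by
    have : ω / (2*τ) * SA - SC + τ / (2*ω) * SQ
        = ∑ i, ∑ k, (ω/(2*τ) * (μs i k - μtm1 i k)^2
            - (μs i k - μtm1 i k) * q i k + τ/(2*ω) * (q i k)^2) := by
      rw [hSAdef, hSCdef, hSQdef, Finset.mul_sum, Finset.mul_sum,
        ← Finset.sum_sub_distrib, ← Finset.sum_add_distrib]
      exact Finset.sum_congr rfl fun i _ => by
        rw [Finset.mul_sum, Finset.mul_sum, ← Finset.sum_sub_distrib,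
          ← Finset.sum_add_distrib]
    rw [this]
    apply Finset.sum_nonneg
    intro i _
    apply Finset.sum_nonneg
    intro k _
    have hkey : ∀ a c : ℝ, 0 ≤ ω/(2*τ) * a^2 - a * c + τ/(2*ω) * c^2 := by
      intro a c
      have he : ω/(2*τ) * a^2 - a * c + τ/(2*ω) * c^2
          = (ω * a - τ * c)^2 / (2*τ*ω) := by
        field_simp
        ring
      rw [he]
      positivity
    exact hkey _ _
  -- spectral bound: SQ ≤ N
  have hSQN : SQ ≤ N := by
    have hk : ∀ k : Fin n, ∑ i, (q i k)^2 ≤ ∑ i, (xt i k - xs i k)^2 := by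
      intro k
      set v : Fin m → ℝ := fun i => xt i k - xs i k with hvdef
      have heq : ∀ i, q i k = v i - P.mulVec v i := by
        intro i
        have hc := congrFun (hconsensus i) k
        simp only [Finset.sum_apply, Pi.smul_apply, smul_eq_mul] at hc
        simp only [hqdef, Pi.sub_apply, Finset.sum_apply, Pi.smul_apply, smul_eq_mul,
          Matrix.mulVec, dotProduct, hvdef, mul_sub, Finset.sum_sub_distrib]
        rw [hc]
        ring
      calc ∑ i, (q i k)^2 = ∑ i, (v i - P.mulVec v i)^2 :=
            Finset.sum_congr rfl fun i _ => by rw [heq i]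
        _ ≤ ∑ i, (v i)^2 := aux_lemC P hnn hrow hsym hpsd v
        _ = ∑ i, (xt i k - xs i k)^2 := rfl
    calc SQ = ∑ k, ∑ i, (q i k)^2 := Finset.sum_comm
      _ ≤ ∑ k, ∑ i, (xt i k - xs i k)^2 := Finset.sum_le_sum fun k _ => hk k
      _ = N := Finset.sum_comm
  -- strong convexity bound: (α σ / 2) N ≤ B
  have hN0 : 0 ≤ N :=
    Finset.sum_nonneg fun i _ => Finset.sum_nonneg fun k _ => sq_nonneg _
  have hBN : α * σ / 2 * N ≤ B := by
    have hi : ∀ i, α * σ / 2 * ∑ k, (xt i k - xs i k)^2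
        ≤ bregman φ gφ (xs i) (xt i) := by
      intro i
      have h1 := hstrong (xs i) (hxs i).1 (xt i) (hxt i).1
      have h2 := aux_lemD p (xs i - xt i)
      rw [← hσ] at h2
      have h3 : ∑ k, ((xs i - xt i) k)^2 = ∑ k, (xt i k - xs i k)^2 :=
        Finset.sum_congr rfl fun k _ => by simp [Pi.sub_apply]; ring
      rw [h3] at h2
      calc α * σ / 2 * ∑ k, (xt i k - xs i k)^2
          = α / 2 * (σ * ∑ k, (xt i k - xs i k)^2) := by ring
        _ ≤ α / 2 * (lpNorm p (xs i - xt i))^2 := by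
            apply mul_le_mul_of_nonneg_left h2 (by positivity)
        _ ≤ bregman φ gφ (xs i) (xt i) := by
            calc α / 2 * (lpNorm p (xs i - xt i))^2
                = α / 2 * lpNorm p (xs i - xt i) ^ 2 := by ring
              _ ≤ bregman φ gφ (xs i) (xt i) := h1
    calc α * σ / 2 * N = ∑ i, α * σ / 2 * ∑ k, (xt i k - xs i k)^2 := by
          rw [hNdef, Finset.mul_sum]
      _ ≤ ∑ i, bregman φ gφ (xs i) (xt i) := Finset.sum_le_sum fun i _ => hi i
      _ = B := rfl
  have hB0 : 0 ≤ B := le_trans (by positivity) hBN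
  -- scalar inequalities
  have hden : 0 < (2 - ω) * ω * α * σ := by
    have h' := mul_pos h2ω hs
    nlinarith [h']
  have hτ' : τ * (2 - ω) ≤ ρ * (ω * α * σ - γ) := by
    rw [← le_div_iff₀ h2ω]
    exact hτ
  have hcoef : ((1 - ω) * ω * α * σ * ρ + γ * ρ) / ((2 - ω) * ω * α * σ)
      ≤ ρ - τ / (ω * α * σ) := by
    rw [div_le_iff₀ hden]
    have hexp : (ρ - τ / (ω * α * σ)) * ((2 - ω) * ω * α * σ)
        = ρ * (2 - ω) * (ω * α * σ) - τ * (2 - ω) := by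
      field_simp
    rw [hexp]
    nlinarith [hτ', hs, h2ω]
  have hc0 : 0 ≤ ((1 - ω) * ω * α * σ * ρ + γ * ρ) / ((2 - ω) * ω * α * σ) := by
    apply div_nonneg _ (le_of_lt hden)
    have h1 : (0:ℝ) < (1 - ω) * ω * α * σ * ρ :=
      mul_pos (mul_pos (mul_pos (mul_pos (by linarith : (0:ℝ) < 1 - ω) hω0) hα) hσ0) hρ
    nlinarith [h1, mul_pos hγ0 hρ]
  -- chaining products
  have hP1 : τ / (2*ω) * SQ ≤ τ / (2*ω) * N :=
    mul_le_mul_of_nonneg_left hSQN (by positivity)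
  have hP2 : τ / (2*ω) * N ≤ τ / (ω * α * σ) * B := by
    have e : τ / (2*ω) * N = τ / (ω * α * σ) * (α * σ / 2 * N) := by
      field_simp
    rw [e]
    exact mul_le_mul_of_nonneg_left hBN (by positivity)
  have hP3 : ((1 - ω) * ω * α * σ * ρ + γ * ρ) / ((2 - ω) * ω * α * σ) * B
      ≤ ρ * B - τ / (ω * α * σ) * B := by
    have h1 := mul_le_mul_of_nonneg_right hcoef hB0
    have h2 : (ρ - τ / (ω * α * σ)) * B = ρ * B - τ / (ω * α * σ) * B := by ring
    rw [h2] at h1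
    exact h1
  constructor
  · linarith [hH, hYoung, hP1, hP2, hP3]
  · have hcB : 0 ≤ ((1 - ω) * ω * α * σ * ρ + γ * ρ) / ((2 - ω) * ω * α * σ) * B :=
      mul_nonneg hc0 hB0
    linarith [hH, hYoung, hP1, hP2, hP3, hcB]
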